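/- Let A ∈ ℝ^{n×m} and B ∈ ℝ^{n×p}, let p ∈ [0,1]^n be a probability distribution, and suppose there exists β > 0 such that p_k ≥ β ‖A(k,:)‖₂² / ‖A‖_F² for all k ∈ [n]. Draw s row indices ξ⁽¹⁾, …, ξ⁽ˢ⁾ i.i.d. from p and form the approximate product (S A)ᵀ S B = (1/s) Σ_{t=1}^s A(ξ⁽ᵗ⁾,:)ᵀ B(ξ⁽ᵗ⁾,:)/p_{ξ⁽ᵗ⁾}, where S is the corresponding row sampling and rescaling matrix. Then E[‖AᵀB − (S A)ᵀ S B‖_F²] ≤ (1/(β s)) ‖A‖_F² ‖B‖_F². -/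

import Mathlib

open Matrix MeasureTheory

/-- Squared Frobenius norm of a real matrix. -/
noncomputable def frobSq {m n : Type*} [Fintype m] [Fintype n] (M : Matrix m n ℝ) : ℝ :=
  ∑ i, ∑ j, (M i j) ^ 2

/-- Square of the smallest singular value of a matrix, as the infimum of
squared norms `‖M x‖₂²` over unit vectors `x`. -/
noncomputable def sigmaMinSq {m n : Type*} [Fintype m] [Fintype n] (M : Matrix m n ℝ) : ℝ :=
  sInf {c : ℝ | ∃ x : n → ℝ, ∑ i, (x i) ^ 2 = 1 ∧ c = ∑ j, (M.mulVec x j) ^ 2}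

/-- Square of the largest singular value of a matrix. -/
noncomputable def sigmaMaxSq {m n : Type*} [Fintype m] [Fintype n] (M : Matrix m n ℝ) : ℝ :=
  sSup {c : ℝ | ∃ x : n → ℝ, ∑ i, (x i) ^ 2 = 1 ∧ c = ∑ j, (M.mulVec x j) ^ 2}

/-- The weighted row-sampling ("RandSample") matrix determined by the sampled
indices `ξ : Fin s → Fin N` and the sampling probabilities `p`:
`S j i = 1/√(s pᵢ)` if `ξ j = i` and `0` otherwise. -/
noncomputable def randSampleMatrix {N : ℕ} (s : ℕ) (p : Fin N → ℝ) (ξ : Fin s → Fin N) :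
    Matrix (Fin s) (Fin N) ℝ :=
  fun j i => if ξ j = i then 1 / Real.sqrt (s * p i) else 0

/-- The measure on `Fin N` in which index `i` has probability `p i`. -/
noncomputable def sampleMeasure {N : ℕ} (p : Fin N → ℝ) : Measure (Fin N) :=
  ∑ i, ENNReal.ofReal (p i) • Measure.dirac i

/-- The law of `s` i.i.d. indices, each drawn from the distribution `p` on `Fin N`. -/
noncomputable def sampleMeasurePi {N : ℕ} (s : ℕ) (p : Fin N → ℝ) :
    Measure (Fin s → Fin N) :=
  Measure.pi fun _ => sampleMeasure p

/-! ### Auxiliary lemmas -/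

lemma rmm_sampleMeasure_singleton {N : ℕ} (p : Fin N → ℝ) (i : Fin N) :
    sampleMeasure p {i} = ENNReal.ofReal (p i) := by
  simp only [sampleMeasure, Measure.finset_sum_apply, Measure.smul_apply,
    Measure.dirac_apply' _ (measurableSet_singleton i), smul_eq_mul]
  rw [Finset.sum_eq_single i]
  · simp
  · intro b _ hb
    simp [Set.indicator, hb]
  · simp

instance rmm_sampleMeasure_finite {N : ℕ} (p : Fin N → ℝ) :
    IsFiniteMeasure (sampleMeasure p) := by
  constructor
  simp only [sampleMeasure, Measure.finset_sum_apply, Measure.smul_apply, smul_eq_mul]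
  exact ENNReal.sum_lt_top.2 fun i _ => by simp [ENNReal.mul_lt_top, measure_lt_top]

instance rmm_sampleMeasurePi_finite {N s : ℕ} (p : Fin N → ℝ) :
    IsFiniteMeasure (sampleMeasurePi s p) := by
  unfold sampleMeasurePi; infer_instance

lemma rmm_sampleMeasurePi_singleton {N s : ℕ} (p : Fin N → ℝ) (hp0 : ∀ k, 0 ≤ p k)
    (ξ : Fin s → Fin N) :
    (sampleMeasurePi s p {ξ}).toReal = ∏ t, p (ξ t) := by
  rw [sampleMeasurePi, ← Set.univ_pi_singleton ξ, Measure.pi_pi]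
  simp only [rmm_sampleMeasure_singleton]
  rw [← ENNReal.ofReal_prod_of_nonneg (fun t _ => hp0 (ξ t))]
  exact ENNReal.toReal_ofReal (Finset.prod_nonneg fun t _ => hp0 (ξ t))

lemma rmm_integral_sampleMeasurePi {N s : ℕ} (p : Fin N → ℝ) (hp0 : ∀ k, 0 ≤ p k)
    (f : (Fin s → Fin N) → ℝ) :
    ∫ ξ, f ξ ∂(sampleMeasurePi s p) = ∑ ξ : Fin s → Fin N, (∏ t, p (ξ t)) * f ξ := by
  rw [integral_fintype Integrable.of_finite]
  exact Finset.sum_congr rfl fun ξ _ => by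
    rw [measureReal_def, rmm_sampleMeasurePi_singleton p hp0, smul_eq_mul]

section expectation
variable {N s : ℕ} {p : Fin N → ℝ}

lemma rmm_exp_single (hp1 : ∑ k, p k = 1) (h : Fin N → ℝ) (t : Fin s) :
    ∑ ξ : Fin s → Fin N, (∏ r, p (ξ r)) * h (ξ t) = ∑ k, p k * h k := by
  calc ∑ ξ : Fin s → Fin N, (∏ r, p (ξ r)) * h (ξ t)
      = ∑ ξ : Fin s → Fin N, ∏ r, (p (ξ r) * (if r = t then h (ξ r) else 1)) := by
        refine Finset.sum_congr rfl fun ξ _ => ?_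
        rw [Finset.prod_mul_distrib, Finset.prod_ite_eq']
        simp
    _ = ∏ r : Fin s, ∑ k, p k * (if r = t then h k else 1) := by
        have hm := Finset.prod_univ_sum (fun _ : Fin s => (Finset.univ : Finset (Fin N)))
          (fun r k => p k * (if r = t then h k else 1))
        rw [Fintype.piFinset_univ] at hm
        rw [hm]
    _ = ∑ k, p k * h k := by
        have : ∀ r : Fin s, (∑ k, p k * (if r = t then h k else 1))
            = if r = t then ∑ k, p k * h k else 1 := by
          intro r
          by_cases hr : r = t <;> simp [hr, hp1]
        rw [Finset.prod_congr rfl fun r _ => this r, Finset.prod_ite_eq']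
        simp

lemma rmm_exp_pair (hp1 : ∑ k, p k = 1) (h h' : Fin N → ℝ) {t t' : Fin s} (htt : t ≠ t') :
    ∑ ξ : Fin s → Fin N, (∏ r, p (ξ r)) * (h (ξ t) * h' (ξ t'))
      = (∑ k, p k * h k) * (∑ k, p k * h' k) := by
  calc ∑ ξ : Fin s → Fin N, (∏ r, p (ξ r)) * (h (ξ t) * h' (ξ t'))
      = ∑ ξ : Fin s → Fin N,
          ∏ r, (p (ξ r) * ((if r = t then h (ξ r) else 1) * (if r = t' then h' (ξ r) else 1))) := by
        refine Finset.sum_congr rfl fun ξ _ => ?_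
        rw [Finset.prod_mul_distrib, Finset.prod_mul_distrib, Finset.prod_ite_eq',
          Finset.prod_ite_eq']
        simp
    _ = ∏ r : Fin s, ∑ k, p k * ((if r = t then h k else 1) * (if r = t' then h' k else 1)) := by
        have hm := Finset.prod_univ_sum (fun _ : Fin s => (Finset.univ : Finset (Fin N)))
          (fun r k => p k * ((if r = t then h k else 1) * (if r = t' then h' k else 1)))
        rw [Fintype.piFinset_univ] at hm
        rw [hm]
    _ = (∑ k, p k * h k) * (∑ k, p k * h' k) := by
        have : ∀ r : Fin s, (∑ k, p k * ((if r = t then h k else 1) * (if r = t' then h' k else 1)))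
            = (if r = t then ∑ k, p k * h k else 1) * (if r = t' then ∑ k, p k * h' k else 1) := by
          intro r
          by_cases hr : r = t <;> by_cases hr' : r = t' <;> simp_all [hp1, mul_comm]
        rw [Finset.prod_congr rfl fun r _ => this r, Finset.prod_mul_distrib,
          Finset.prod_ite_eq', Finset.prod_ite_eq']
        simp

lemma rmm_exp_sq_sum (hp1 : ∑ k, p k = 1) (z : Fin N → ℝ) (hz : ∑ k, p k * z k = 0) :
    ∑ ξ : Fin s → Fin N, (∏ r, p (ξ r)) * (∑ t, z (ξ t)) ^ 2
      = s * ∑ k, p k * z k ^ 2 := by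
  have key : ∀ t t' : Fin s, ∑ ξ : Fin s → Fin N, (∏ r, p (ξ r)) * (z (ξ t) * z (ξ t'))
      = if t = t' then ∑ k, p k * z k ^ 2 else 0 := by
    intro t t'
    by_cases htt : t = t'
    · subst htt
      simp only [if_pos rfl]
      have := rmm_exp_single (s := s) hp1 (fun k => z k ^ 2) t
      simpa [pow_two] using this
    · rw [rmm_exp_pair hp1 z z htt, hz, if_neg htt]
      ring
  calc ∑ ξ : Fin s → Fin N, (∏ r, p (ξ r)) * (∑ t, z (ξ t)) ^ 2
      = ∑ ξ : Fin s → Fin N, ∑ t, ∑ t', (∏ r, p (ξ r)) * (z (ξ t) * z (ξ t')) := by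
        refine Finset.sum_congr rfl fun ξ _ => ?_
        rw [pow_two, Finset.sum_mul_sum]
        rw [Finset.mul_sum]
        exact Finset.sum_congr rfl fun t _ => by rw [Finset.mul_sum]
    _ = ∑ t, ∑ t', ∑ ξ : Fin s → Fin N, (∏ r, p (ξ r)) * (z (ξ t) * z (ξ t')) := by
        rw [Finset.sum_comm]
        exact Finset.sum_congr rfl fun t _ => Finset.sum_comm
    _ = ∑ t : Fin s, ∑ t' : Fin s, if t = t' then ∑ k, p k * z k ^ 2 else 0 :=
        Finset.sum_congr rfl fun t _ => Finset.sum_congr rfl fun t' _ => key t t'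
    _ = s * ∑ k, p k * z k ^ 2 := by
        simp [Finset.sum_ite_eq, mul_comm]

end expectation

lemma rmm_mul_apply {n' q' s' : ℕ} (p' : Fin n' → ℝ) (M : Matrix (Fin n') (Fin q') ℝ)
    (ξ : Fin s' → Fin n') (t : Fin s') (i : Fin q') :
    (randSampleMatrix s' p' ξ * M) t i
      = (1 / Real.sqrt (s' * p' (ξ t))) * M (ξ t) i := by
  rw [Matrix.mul_apply]
  simp only [randSampleMatrix, ite_mul, zero_mul]
  rw [Finset.sum_ite_eq]
  simp

/-- Lemma 4.3, randomized matrix-matrix multiplication, expected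
squared Frobenius error bound. If `p_k ≥ β ‖A(k,:)‖₂²/‖A‖_F²` for all `k`, then
`E[‖AᵀB − (SA)ᵀ SB‖_F²] ≤ ‖A‖_F² ‖B‖_F² / (β s)`. -/
theorem randomized_matmul_error_bound {n m q s : ℕ} (hs : 0 < s)
    (A : Matrix (Fin n) (Fin m) ℝ) (B : Matrix (Fin n) (Fin q) ℝ)
    (p : Fin n → ℝ) (hp0 : ∀ k, 0 ≤ p k) (hp1 : ∑ k, p k = 1)
    (β : ℝ) (hβ : 0 < β)
    (hpk : ∀ k, β * (∑ i, (A k i) ^ 2) / frobSq A ≤ p k) :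
    ∫ ξ, frobSq (Aᵀ * B -
          (randSampleMatrix s p ξ * A)ᵀ * (randSampleMatrix s p ξ * B))
        ∂(sampleMeasurePi s p)
      ≤ 1 / (β * s) * (frobSq A * frobSq B) := by
  have hs' : (0:ℝ) < s := Nat.cast_pos.mpr hs
  by_cases hA : frobSq A = 0
  · -- degenerate case: A = 0
    have hA0 : A = 0 := by
      have h1 := (Finset.sum_eq_zero_iff_of_nonneg
        (fun k _ => Finset.sum_nonneg fun i _ => sq_nonneg (A k i))).mp hA
      ext k i
      have h2 := (Finset.sum_eq_zero_iff_of_nonneg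
        (fun i _ => sq_nonneg (A k i))).mp (h1 k (Finset.mem_univ k)) i (Finset.mem_univ i)
      simpa using pow_eq_zero_iff (n := 2) (by norm_num) |>.mp h2
    subst hA0
    simp only [Matrix.transpose_zero, Matrix.zero_mul, Matrix.mul_zero, sub_zero,
      zero_sub, frobSq]
    simp only [Matrix.zero_apply, ne_eq, OfNat.ofNat_ne_zero, not_false_eq_true,
      zero_pow, Finset.sum_const_zero, neg_zero, integral_zero]
    positivity
  · have hApos : 0 < frobSq A := lt_of_le_of_ne
      (Finset.sum_nonneg fun k _ => Finset.sum_nonneg fun i _ => sq_nonneg _) (Ne.symm hA)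
    -- rows with zero probability are zero rows of A
    have hA0 : ∀ k, p k = 0 → ∀ i, A k i = 0 := by
      intro k hk i
      have h1 := hpk k
      rw [hk, div_le_iff₀ hApos, zero_mul] at h1
      have h2 : ∑ i, (A k i) ^ 2 ≤ 0 := by
        nlinarith [Finset.sum_nonneg fun i (_ : i ∈ Finset.univ) => sq_nonneg (A k i)]
      have h3 : ∑ i, (A k i) ^ 2 = 0 := le_antisymm h2
        (Finset.sum_nonneg fun i _ => sq_nonneg _)
      have h4 := (Finset.sum_eq_zero_iff_of_nonneg
        (fun i _ => sq_nonneg (A k i))).mp h3 i (Finset.mem_univ i)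
      simpa using pow_eq_zero_iff (n := 2) (by norm_num) |>.mp h4
    set C : Matrix (Fin m) (Fin q) ℝ := Aᵀ * B with hC
    set z : Fin m → Fin q → Fin n → ℝ :=
      fun i j k => C i j / s - ((s:ℝ) * p k)⁻¹ * (A k i * B k j) with hzdef
    have hCij : ∀ i j, C i j = ∑ k, A k i * B k j := by
      intro i j
      simp [hC, Matrix.mul_apply, Matrix.transpose_apply]
    -- pointwise identity for the integrand
    have hint : ∀ ξ : Fin s → Fin n,
        frobSq (Aᵀ * B - (randSampleMatrix s p ξ * A)ᵀ * (randSampleMatrix s p ξ * B))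
          = ∑ i, ∑ j, (∑ t, z i j (ξ t)) ^ 2 := by
      intro ξ
      unfold frobSq
      refine Finset.sum_congr rfl fun i _ => Finset.sum_congr rfl fun j _ => ?_
      congr 1
      have hM : ((randSampleMatrix s p ξ * A)ᵀ * (randSampleMatrix s p ξ * B)) i j
          = ∑ t, ((s:ℝ) * p (ξ t))⁻¹ * (A (ξ t) i * B (ξ t) j) := by
        rw [Matrix.mul_apply]
        refine Finset.sum_congr rfl fun t _ => ?_
        rw [Matrix.transpose_apply, rmm_mul_apply, rmm_mul_apply]
        have hx : (0:ℝ) ≤ (s:ℝ) * p (ξ t) := mul_nonneg hs'.le (hp0 _)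
        have h2 : Real.sqrt ((s:ℝ) * p (ξ t)) * Real.sqrt ((s:ℝ) * p (ξ t))
            = (s:ℝ) * p (ξ t) := Real.mul_self_sqrt hx
        calc (1 / Real.sqrt ((s:ℝ) * p (ξ t)) * A (ξ t) i)
              * (1 / Real.sqrt ((s:ℝ) * p (ξ t)) * B (ξ t) j)
            = (Real.sqrt ((s:ℝ) * p (ξ t)) * Real.sqrt ((s:ℝ) * p (ξ t)))⁻¹
              * (A (ξ t) i * B (ξ t) j) := by
              rw [mul_inv]; ring
          _ = ((s:ℝ) * p (ξ t))⁻¹ * (A (ξ t) i * B (ξ t) j) := by rw [h2]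
      rw [Matrix.sub_apply, hM, ← hC]
      rw [Finset.sum_sub_distrib]
      congr 1
      rw [Finset.sum_const, Finset.card_univ, Fintype.card_fin, nsmul_eq_mul,
        mul_div_cancel₀ _ (ne_of_gt hs')]
    -- mean of the sampled term
    have hy : ∀ i j, ∑ k, p k * (((s:ℝ) * p k)⁻¹ * (A k i * B k j)) = C i j / s := by
      intro i j
      rw [hCij, Finset.sum_div]
      refine Finset.sum_congr rfl fun k _ => ?_
      by_cases hk : p k = 0
      · simp [hk, hA0 k hk i]
      · field_simp
    have hz : ∀ i j, ∑ k, p k * z i j k = 0 := by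
      intro i j
      simp only [hzdef, mul_sub]
      rw [Finset.sum_sub_distrib, hy i j, ← Finset.sum_mul, hp1, one_mul, sub_self]
    -- compute the integral
    rw [rmm_integral_sampleMeasurePi p hp0]
    calc ∑ ξ : Fin s → Fin n, (∏ t, p (ξ t)) *
            frobSq (Aᵀ * B - (randSampleMatrix s p ξ * A)ᵀ * (randSampleMatrix s p ξ * B))
        = ∑ i, ∑ j, ∑ ξ : Fin s → Fin n, (∏ t, p (ξ t)) * (∑ t, z i j (ξ t)) ^ 2 := by
          have e0 : ∀ ξ : Fin s → Fin n, (∏ t, p (ξ t)) *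
              frobSq (Aᵀ * B - (randSampleMatrix s p ξ * A)ᵀ * (randSampleMatrix s p ξ * B))
              = ∑ i, ∑ j, (∏ t, p (ξ t)) * (∑ t, z i j (ξ t)) ^ 2 := by
            intro ξ
            rw [hint ξ, Finset.mul_sum]
            exact Finset.sum_congr rfl fun i _ => Finset.mul_sum _ _ _
          rw [Finset.sum_congr rfl fun ξ _ => e0 ξ, Finset.sum_comm]
          exact Finset.sum_congr rfl fun i _ => Finset.sum_comm
      _ = ∑ i, ∑ j, (s:ℝ) * ∑ k, p k * z i j k ^ 2 :=
          Finset.sum_congr rfl fun i _ => Finset.sum_congr rfl fun j _ =>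
            rmm_exp_sq_sum hp1 (z i j) (hz i j)
      _ ≤ ∑ i, ∑ j, (s:ℝ) * ∑ k, p k * (((s:ℝ) * p k)⁻¹ * (A k i * B k j)) ^ 2 := by
          refine Finset.sum_le_sum fun i _ => Finset.sum_le_sum fun j _ => ?_
          refine mul_le_mul_of_nonneg_left ?_ (le_of_lt hs')
          -- variance ≤ second moment
          have e1 : ∑ k, p k * z i j k ^ 2
              = ∑ k, (p k * (C i j / s) ^ 2 - 2 * (C i j / s) * (p k * (((s:ℝ) * p k)⁻¹ * (A k i * B k j)))
                  + p k * (((s:ℝ) * p k)⁻¹ * (A k i * B k j)) ^ 2) :=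
            Finset.sum_congr rfl fun k _ => by simp only [hzdef]; ring
          rw [e1, Finset.sum_add_distrib, Finset.sum_sub_distrib, ← Finset.sum_mul,
            ← Finset.mul_sum, hy i j, hp1, one_mul]
          nlinarith [sq_nonneg (C i j / (s:ℝ))]
      _ = ∑ k, (s:ℝ) * (p k * (((s:ℝ) * p k)⁻¹) ^ 2 *
            ((∑ i, A k i ^ 2) * (∑ j, B k j ^ 2))) := by
          have e2 : ∀ i j, (s:ℝ) * ∑ k, p k * (((s:ℝ) * p k)⁻¹ * (A k i * B k j)) ^ 2
              = ∑ k, (s:ℝ) * (p k * (((s:ℝ) * p k)⁻¹ * (A k i * B k j)) ^ 2) := fun i j =>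
            Finset.mul_sum _ _ _
          calc ∑ i, ∑ j, (s:ℝ) * ∑ k, p k * (((s:ℝ) * p k)⁻¹ * (A k i * B k j)) ^ 2
              = ∑ i, ∑ j, ∑ k, (s:ℝ) * (p k * (((s:ℝ) * p k)⁻¹ * (A k i * B k j)) ^ 2) :=
                Finset.sum_congr rfl fun i _ => Finset.sum_congr rfl fun j _ => e2 i j
            _ = ∑ i, ∑ k, ∑ j, (s:ℝ) * (p k * (((s:ℝ) * p k)⁻¹ * (A k i * B k j)) ^ 2) :=
                Finset.sum_congr rfl fun i _ => Finset.sum_comm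
            _ = ∑ k, ∑ i, ∑ j, (s:ℝ) * (p k * (((s:ℝ) * p k)⁻¹ * (A k i * B k j)) ^ 2) :=
                Finset.sum_comm
            _ = ∑ k, (s:ℝ) * (p k * (((s:ℝ) * p k)⁻¹) ^ 2 *
                  ((∑ i, A k i ^ 2) * (∑ j, B k j ^ 2))) := by
                refine Finset.sum_congr rfl fun k _ => ?_
                have hsum : ∀ c : ℝ, c * ((∑ i, A k i ^ 2) * (∑ j, B k j ^ 2))
                    = ∑ i, ∑ j, c * (A k i ^ 2 * B k j ^ 2) := by
                  intro c
                  rw [Finset.sum_mul_sum, Finset.mul_sum]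
                  exact Finset.sum_congr rfl fun i _ => by rw [Finset.mul_sum]
                rw [show (s:ℝ) * (p k * (((s:ℝ) * p k)⁻¹) ^ 2 *
                    ((∑ i, A k i ^ 2) * (∑ j, B k j ^ 2)))
                  = ((s:ℝ) * (p k * (((s:ℝ) * p k)⁻¹) ^ 2)) *
                    ((∑ i, A k i ^ 2) * (∑ j, B k j ^ 2)) from by ring, hsum]
                exact Finset.sum_congr rfl fun i _ => Finset.sum_congr rfl fun j _ => by ring
      _ ≤ ∑ k, 1 / (β * s) * frobSq A * (∑ j, B k j ^ 2) := by
          refine Finset.sum_le_sum fun k _ => ?_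
          by_cases hk : p k = 0
          · have hb : (0:ℝ) ≤ ∑ j, B k j ^ 2 := Finset.sum_nonneg fun j _ => sq_nonneg _
            have hβs : (0:ℝ) < β * s := mul_pos hβ hs'
            rw [hk]
            simp only [zero_mul, mul_zero]
            exact mul_nonneg (mul_nonneg (one_div_nonneg.mpr hβs.le) hApos.le) hb
          · have hp : 0 < p k := (hp0 k).lt_of_ne (Ne.symm hk)
            have hspk : (0:ℝ) < (s:ℝ) * p k := by positivity
            have hβs : (0:ℝ) < β * s := by positivity
            have hb : (0:ℝ) ≤ ∑ j, B k j ^ 2 := Finset.sum_nonneg fun j _ => sq_nonneg _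
            have h1 : β * (∑ i, A k i ^ 2) ≤ p k * frobSq A := by
              have := hpk k
              rwa [div_le_iff₀ hApos] at this
            have eL : (s:ℝ) * (p k * (((s:ℝ) * p k)⁻¹) ^ 2 *
                ((∑ i, A k i ^ 2) * (∑ j, B k j ^ 2)))
                = (∑ i, A k i ^ 2) * (∑ j, B k j ^ 2) / ((s:ℝ) * p k) := by
              field_simp
            have eR : 1 / (β * s) * frobSq A * (∑ j, B k j ^ 2)
                = frobSq A * (∑ j, B k j ^ 2) / (β * s) := by ring
            rw [eL, eR, div_le_div_iff₀ hspk hβs]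
            have h2 : β * (∑ i, A k i ^ 2) * (∑ j, B k j ^ 2)
                ≤ p k * frobSq A * (∑ j, B k j ^ 2) := mul_le_mul_of_nonneg_right h1 hb
            have h3 := mul_le_mul_of_nonneg_right h2 hs'.le
            calc (∑ i, A k i ^ 2) * (∑ j, B k j ^ 2) * (β * s)
                = β * (∑ i, A k i ^ 2) * (∑ j, B k j ^ 2) * s := by ring
              _ ≤ p k * frobSq A * (∑ j, B k j ^ 2) * s := h3
              _ = frobSq A * (∑ j, B k j ^ 2) * ((s:ℝ) * p k) := by ring
      _ = 1 / (β * s) * (frobSq A * frobSq B) := by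
          have hfB : frobSq B = ∑ k, ∑ j, B k j ^ 2 := rfl
          rw [← Finset.mul_sum, mul_assoc, ← hfB]
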